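/- With the period Ω_c defined below, and assuming additionally that f is twice continuously differentiable in a neighbourhood of r* with f″(r*) < 0, the limit of Ω_c as c → f(r*)⁻ equals 2π/√(−f″(r*)·f(r*)). -/

import Mathlib

open Set Filter MeasureTheory Real

lemma integrableOn_inv_sqrt_one_sub_sq :
    MeasureTheory.IntegrableOn (fun v : ℝ => (Real.sqrt (1 - v ^ 2))⁻¹) (Set.Ioc (-1) 1) := by
  have h : ∀ x ∈ Set.Ioo (-1:ℝ) 1, HasDerivAt Real.arcsin ((Real.sqrt (1 - x ^ 2))⁻¹) x := by
    intro x hx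
    simpa [one_div] using Real.hasDerivAt_arcsin hx.1.ne' hx.2.ne
  exact intervalIntegral.integrableOn_deriv_of_nonneg Real.continuous_arcsin.continuousOn h
    (fun x hx => by positivity)

lemma integral_inv_sqrt_one_sub_sq :
    ∫ v in Set.Ioo (-1:ℝ) 1, (Real.sqrt (1 - v ^ 2))⁻¹ = Real.pi := by
  rw [← MeasureTheory.integral_Ioc_eq_integral_Ioo,
      ← intervalIntegral.integral_of_le (by norm_num : (-1:ℝ) ≤ 1)]
  rw [intervalIntegral.integral_eq_sub_of_hasDeriv_right_of_le (by norm_num)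
      Real.continuous_arcsin.continuousOn
      (fun x hx => ((by simpa [one_div] using
        Real.hasDerivAt_arcsin hx.1.ne' hx.2.ne : HasDerivAt Real.arcsin
          ((Real.sqrt (1 - x ^ 2))⁻¹) x)).hasDerivWithinAt)
      ((intervalIntegrable_iff_integrableOn_Ioc_of_le (by norm_num)).2
        integrableOn_inv_sqrt_one_sub_sq)]
  rw [Real.arcsin_one, Real.arcsin_neg_one]; ring

set_option maxHeartbeats 2000000 in
/-- For the metric `ds² = dr² + f(r)²dθ²` on a two-sphere, with profile `f` vanishing at the
endpoints with one-sided derivatives `f′(0) = 1` and `f′(1) = −β` and a unique interior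
maximum at `r*`, the θ-period `Ω_c = 2∫_{r₁(c)}^{r₂(c)} c/(f·√(f²−c²)) dr` of the geodesic
with Clairaut constant `c` satisfies, when `f` is additionally `C²` near `r*` with
`f″(r*) < 0`, `Ω_c → 2π/√(−f″(r*)·f(r*))` as `c → f(r*)⁻`. -/
theorem period_limit_at_max
    (f : ℝ → ℝ) (β rstar : ℝ) (r₁ r₂ : ℝ → ℝ)
    (hβ : 0 < β)
    (hcont : ContinuousOn f (Set.Icc 0 1))
    (hf0 : f 0 = 0) (hf1 : f 1 = 0)
    (hfpos : ∀ r ∈ Set.Ioo (0 : ℝ) 1, 0 < f r)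
    (hdiff : ContDiffOn ℝ 1 f (Set.Ioo 0 1))
    (hd0 : HasDerivWithinAt f 1 (Set.Ici 0) 0)
    (hd1 : HasDerivWithinAt f (-β) (Set.Iic 1) 1)
    (hrstar : rstar ∈ Set.Ioo (0 : ℝ) 1)
    (hmono : StrictMonoOn f (Set.Icc 0 rstar))
    (hanti : StrictAntiOn f (Set.Icc rstar 1))
    (hr₁ : ∀ c ∈ Set.Ioo 0 (f rstar), r₁ c ∈ Set.Ioo 0 rstar ∧ f (r₁ c) = c)
    (hr₂ : ∀ c ∈ Set.Ioo 0 (f rstar), r₂ c ∈ Set.Ioo rstar 1 ∧ f (r₂ c) = c)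
    (hint : ∀ c ∈ Set.Ioo 0 (f rstar),
      IntervalIntegrable (fun r => c / (f r * Real.sqrt ((f r) ^ 2 - c ^ 2)))
        volume (r₁ c) (r₂ c))
    (hC2 : ∃ ε > 0, ContDiffOn ℝ 2 f (Set.Ioo (rstar - ε) (rstar + ε)))
    (hf'' : deriv (deriv f) rstar < 0) :
    Filter.Tendsto
      (fun c => 2 * ∫ r in (r₁ c)..(r₂ c), c / (f r * Real.sqrt ((f r) ^ 2 - c ^ 2)))
      (nhdsWithin (f rstar) (Set.Iio (f rstar)))
      (nhds (2 * Real.pi / Real.sqrt (-(deriv (deriv f) rstar) * f rstar))) := by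
  obtain ⟨ε, hε, hC2⟩ := hC2
  obtain ⟨hrs0, hrs1⟩ := hrstar
  set M := f rstar with hMdef
  set aa := -(deriv (deriv f) rstar) with haadef
  have ha : 0 < aa := neg_pos.2 hf''
  have hM : 0 < M := hfpos rstar ⟨hrs0, hrs1⟩
  set V : Set ℝ := Set.Ioo (rstar - ε) (rstar + ε) ∩ Set.Ioo 0 1 with hVdef
  have hVopen : IsOpen V := isOpen_Ioo.inter isOpen_Ioo
  have hrsV : rstar ∈ V := ⟨⟨by linarith, by linarith⟩, hrs0, hrs1⟩
  have hfC2V : ContDiffOn ℝ 2 f V := hC2.mono inter_subset_left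
  have hfd : ∀ x ∈ V, HasDerivAt f (deriv f x) x := fun x hx =>
    (((hfC2V.differentiableOn (by norm_num)).differentiableAt (hVopen.mem_nhds hx))).hasDerivAt
  have hf'C1 : ContDiffOn ℝ 1 (deriv f) V := by
    have := hfC2V.deriv_of_isOpen hVopen (n := 2) (m := 1) (by norm_num)
    exact this
  have hf'cont : ContinuousOn (deriv f) V := hf'C1.continuousOn
  have hf'd : ∀ x ∈ V, HasDerivAt (deriv f) (deriv (deriv f) x) x := fun x hx =>
    (((hf'C1.differentiableOn (by norm_num)).differentiableAt (hVopen.mem_nhds hx))).hasDerivAt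
  have hf''cont : ContinuousOn (deriv (deriv f)) V :=
    hf'C1.continuousOn_deriv_of_isOpen hVopen (le_refl _)
  have hf'0 : deriv f rstar = 0 := by
    have hmax : IsLocalMax f rstar := by
      filter_upwards [Ioo_mem_nhds hrs0 hrs1] with r hr
      rcases le_total r rstar with h | h
      · exact hmono.monotoneOn ⟨hr.1.le, h⟩ ⟨hrs0.le, le_rfl⟩ h
      · exact hanti.antitoneOn ⟨le_rfl, hrs1.le⟩ ⟨h, hr.2.le⟩ h
    exact hmax.deriv_eq_zero
  -- choose δ
  have hev : ∀ᶠ r in nhds rstar, deriv (deriv f) r < -(aa/2) ∧ r ∈ V := by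
    have hca : ContinuousAt (deriv (deriv f)) rstar :=
      hf''cont.continuousAt (hVopen.mem_nhds hrsV)
    have h1 : ∀ᶠ r in nhds rstar, deriv (deriv f) r < -(aa/2) :=
      hca.tendsto.eventually_lt_const (by linarith [haadef])
    exact h1.and (hVopen.eventually_mem hrsV)
  obtain ⟨δ', hδ'pos, hδ'⟩ := Metric.eventually_nhds_iff_ball.1 hev
  set K := Set.Icc (rstar - δ'/2) (rstar + δ'/2) with hKdef
  set δ := δ'/2 with hδdef
  have hδ : 0 < δ := by positivity
  have hKsub : ∀ r ∈ K, deriv (deriv f) r < -(aa/2) ∧ r ∈ V := by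
    intro r hr
    apply hδ'
    rw [Metric.mem_ball, Real.dist_eq]
    have h1 := hr.1; have h2 := hr.2
    rw [abs_lt]; constructor <;> [skip; skip] <;> linarith [hδdef, hδ'pos]
  have hKV : K ⊆ V := fun r hr => (hKsub r hr).2
  have hf''K : ∀ r ∈ K, deriv (deriv f) r < -(aa/2) := fun r hr => (hKsub r hr).1
  have hK01 : K ⊆ Set.Ioo 0 1 := fun r hr => (hKV hr).2
  have hrsK : rstar ∈ K := ⟨by linarith, by linarith⟩
  have hKlo : 0 < rstar - δ := (hK01 ⟨le_rfl, by linarith⟩).1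
  have hKhi : rstar + δ < 1 := (hK01 ⟨by linarith, le_rfl⟩).2
  have hf'anti : StrictAntiOn (deriv f) K := by
    apply strictAntiOn_of_deriv_neg (convex_Icc _ _) (hf'cont.mono hKV)
    intro x hx
    simp only [hKdef, interior_Icc] at hx
    have hxK : x ∈ K := Ioo_subset_Icc_self hx
    have := hf''K x hxK; linarith
  have hf'pos : ∀ r ∈ K, r < rstar → 0 < deriv f r := fun r hr h => by
    have := hf'anti hr hrsK h; rwa [hf'0] at this
  have hf'neg : ∀ r ∈ K, rstar < r → deriv f r < 0 := fun r hr h => by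
    have := hf'anti hrsK hr h; rwa [hf'0] at this
  have hfltM : ∀ r ∈ K, r ≠ rstar → f r < M := by
    intro r hr hne
    rcases lt_or_gt_of_ne hne with h | h
    · exact hmono ⟨(hK01 hr).1.le, h.le⟩ ⟨hrs0.le, le_rfl⟩ h
    · exact hanti ⟨le_rfl, hrs1.le⟩ ⟨h.le, (hK01 hr).2.le⟩ h
  have hfleM : ∀ r ∈ K, f r ≤ M := by
    intro r hr
    rcases eq_or_ne r rstar with rfl | h
    · exact le_rfl
    · exact (hfltM r hr h).le
  -- the Morse-type coordinate g
  set g : ℝ → ℝ := fun r => if r < rstar then -Real.sqrt (M - f r) else Real.sqrt (M - f r)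
    with hgdef
  have hg0 : g rstar = 0 := by
    simp only [hgdef, lt_irrefl, if_false, hMdef, sub_self, Real.sqrt_zero]
  have hgge : ∀ r, rstar ≤ r → g r = Real.sqrt (M - f r) := fun r h => if_neg (not_lt.2 h)
  have hglt : ∀ r, r < rstar → g r = -Real.sqrt (M - f r) := fun r h => if_pos h
  have hgsq : ∀ r ∈ K, g r ^ 2 = M - f r := by
    intro r hr
    have h0 : 0 ≤ M - f r := sub_nonneg.2 (hfleM r hr)
    by_cases h : r < rstar
    · rw [hglt r h, neg_pow, Real.sq_sqrt h0]; ring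
    · rw [hgge r (not_lt.1 h), Real.sq_sqrt h0]
  have hgneg : ∀ r ∈ K, r < rstar → g r < 0 := by
    intro r hr h
    rw [hglt r h, neg_lt, neg_zero]
    exact Real.sqrt_pos.2 (by linarith [hfltM r hr h.ne])
  have hgpos : ∀ r ∈ K, rstar < r → 0 < g r := by
    intro r hr h
    rw [hgge r h.le]
    exact Real.sqrt_pos.2 (by linarith [hfltM r hr h.ne'])
  have hgmono : StrictMonoOn g K := by
    intro r hr r' hr' hlt
    rcases lt_trichotomy r' rstar with h' | h' | h'
    · have h : r < rstar := hlt.trans h'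
      rw [hglt r h, hglt r' h']
      have hf : f r < f r' := hmono ⟨(hK01 hr).1.le, h.le⟩ ⟨(hK01 hr').1.le, h'.le⟩ hlt
      have : Real.sqrt (M - f r') < Real.sqrt (M - f r) :=
        Real.sqrt_lt_sqrt (sub_nonneg.2 (hfleM r' hr')) (by linarith)
      linarith
    · subst h'; rw [hg0]; exact hgneg r hr hlt
    · rcases lt_trichotomy r rstar with h | h | h
      · exact (hgneg r hr h).trans (hgpos r' hr' h')
      · subst h; rw [hg0]; exact hgpos r' hr' h'
      · rw [hgge r h.le, hgge r' (h.trans hlt).le]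
        have hf : f r' < f r := hanti ⟨h.le, (hK01 hr).2.le⟩ ⟨(h.trans hlt).le, (hK01 hr').2.le⟩ hlt
        exact Real.sqrt_lt_sqrt (sub_nonneg.2 (hfleM r hr)) (by linarith)
  have hfK : ContinuousOn f K := hcont.mono (fun r hr => Ioo_subset_Icc_self (hK01 hr))
  have hsqc : ContinuousOn (fun r => Real.sqrt (M - f r)) K := (continuousOn_const.sub hfK).sqrt
  have hsubR : Set.Icc rstar (rstar+δ) ⊆ K := Set.Icc_subset_Icc (by linarith) le_rfl
  have hsubL : Set.Icc (rstar-δ) rstar ⊆ K := Set.Icc_subset_Icc le_rfl (by linarith)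
  have hgcontR : ContinuousOn g (Set.Icc rstar (rstar + δ)) :=
    (hsqc.mono hsubR).congr (fun r hr => hgge r hr.1)
  have hgcontL : ContinuousOn g (Set.Icc (rstar-δ) rstar) := by
    apply ((hsqc.mono hsubL).neg).congr
    intro r hr
    rcases lt_or_eq_of_le hr.2 with h | h
    · exact hglt r h
    · subst h; rw [hg0]; simp [hMdef]
  -- the derivative G of g away from rstar
  set G : ℝ → ℝ := fun r => -(deriv f r) / (2 * g r) with hGdef
  have hGderiv : ∀ r ∈ Set.Ioo (rstar - δ) (rstar + δ), r ≠ rstar → HasDerivAt g (G r) r := by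
    intro r hr hne
    have hrK : r ∈ K := Ioo_subset_Icc_self hr
    have hMfpos : 0 < M - f r := sub_pos.2 (hfltM r hrK hne)
    have hinner : HasDerivAt (fun x => M - f x) (-(deriv f r)) r := (hfd r (hKV hrK)).const_sub M
    have hsqrt : HasDerivAt (fun x => Real.sqrt (M - f x))
        (-(deriv f r) / (2 * Real.sqrt (M - f r))) r := by
      have h2 := (Real.hasDerivAt_sqrt hMfpos.ne').comp r hinner
      exact h2.congr_deriv (by ring)
    rcases lt_or_gt_of_ne hne with h | h
    · have hd2 : HasDerivAt (fun x => -Real.sqrt (M - f x))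
          ((deriv f r) / (2 * Real.sqrt (M - f r))) r := by
        exact hsqrt.neg.congr_deriv (by ring)
      have hval : G r = (deriv f r) / (2 * Real.sqrt (M - f r)) := by
        simp only [hGdef]
        rw [hglt r h, mul_neg, div_neg, neg_div, neg_neg]
      rw [hval]
      apply hd2.congr_of_eventuallyEq
      filter_upwards [Iio_mem_nhds h] with x hx
      exact hglt x hx
    · have hval : G r = -(deriv f r) / (2 * Real.sqrt (M - f r)) := by
        simp only [hGdef]; rw [hgge r h.le]
      rw [hval]
      apply hsqrt.congr_of_eventuallyEq
      filter_upwards [Ioi_mem_nhds h] with x hx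
      exact hgge x hx.le
  have hGpos : ∀ r ∈ K, r ≠ rstar → 0 < G r := by
    intro r hr hne
    rcases lt_or_gt_of_ne hne with h | h
    · have h1 := hf'pos r hr h
      have h2 := hgneg r hr h
      simp only [hGdef]
      exact div_pos_of_neg_of_neg (by linarith) (by linarith)
    · have h1 := hf'neg r hr h
      have h2 := hgpos r hr h
      simp only [hGdef]
      exact div_pos (by linarith) (by linarith)
  -- limit of G at rstar
  set L := Real.sqrt (aa/2) with hLdef
  have hLpos : 0 < L := Real.sqrt_pos.2 (by linarith)
  have hpunct : Set.Ioo (rstar-δ) (rstar+δ) \ {rstar} ∈ nhdsWithin rstar {rstar}ᶜ := by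
    have h1 : Set.Ioo (rstar-δ) (rstar+δ) ∈ nhdsWithin rstar {rstar}ᶜ :=
      nhdsWithin_le_nhds (Ioo_mem_nhds (by linarith) (by linarith))
    have h2 : {rstar}ᶜ ∈ nhdsWithin rstar {rstar}ᶜ := self_mem_nhdsWithin
    simpa [Set.diff_eq] using Filter.inter_mem h1 h2
  have hquot : Tendsto (fun r => (deriv f r)^2 / (4*(M - f r)))
      (nhdsWithin rstar {rstar}ᶜ) (nhds (aa/2)) := by
    apply HasDerivAt.lhopital_zero_nhdsNE
      (f' := fun r => 2 * deriv f r * deriv (deriv f) r) (g' := fun r => 4 * -(deriv f r))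
    · filter_upwards [hpunct] with r hr
      have h := (hf'd r (hKV (Ioo_subset_Icc_self hr.1))).pow 2
      exact h.congr_deriv (by push_cast; ring)
    · filter_upwards [hpunct] with r hr
      exact ((hfd r (hKV (Ioo_subset_Icc_self hr.1))).const_sub M).const_mul 4
    · filter_upwards [hpunct] with r hr
      have hrK : r ∈ K := Ioo_subset_Icc_self hr.1
      have hne : r ≠ rstar := by simpa using hr.2
      rcases lt_or_gt_of_ne hne with h | h
      · have := hf'pos r hrK h
        exact ne_of_lt (by linarith)
      · have := hf'neg r hrK h
        exact ne_of_gt (by linarith)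
    · have hca : ContinuousAt (deriv f) rstar := hf'cont.continuousAt (hVopen.mem_nhds hrsV)
      have h2 : Tendsto (fun r => (deriv f r)^2) (nhds rstar) (nhds ((deriv f rstar)^2)) :=
        hca.tendsto.pow 2
      rw [hf'0] at h2
      simpa using h2.mono_left nhdsWithin_le_nhds
    · have hcf : ContinuousAt f rstar := (hfd rstar hrsV).continuousAt
      have h2 : Tendsto (fun r => 4*(M - f r)) (nhds rstar) (nhds (4*(M - f rstar))) :=
        (tendsto_const_nhds.sub hcf.tendsto).const_mul 4
      rw [← hMdef] at h2
      simpa using h2.mono_left nhdsWithin_le_nhds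
    · have hcf'' : ContinuousAt (deriv (deriv f)) rstar :=
        hf''cont.continuousAt (hVopen.mem_nhds hrsV)
      have h1 : Tendsto (fun r => deriv (deriv f) r / (-2))
          (nhdsWithin rstar {rstar}ᶜ) (nhds (aa/2)) := by
        have h2 := (hcf''.tendsto.div_const (-2)).mono_left
          (nhdsWithin_le_nhds (s := {rstar}ᶜ))
        have h3 : deriv (deriv f) rstar / (-2) = aa/2 := by
          rw [haadef]; ring
        rwa [h3] at h2
      apply Tendsto.congr' _ h1
      filter_upwards [hpunct] with r hr
      have hrK : r ∈ K := Ioo_subset_Icc_self hr.1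
      have hne : r ≠ rstar := by simpa using hr.2
      have hf'ne : deriv f r ≠ 0 := by
        rcases lt_or_gt_of_ne hne with h | h
        · exact (hf'pos r hrK h).ne'
        · exact (hf'neg r hrK h).ne
      field_simp
      ring
  have hGlim : Tendsto G (nhdsWithin rstar {rstar}ᶜ) (nhds L) := by
    have hsq2 : Tendsto (fun r => Real.sqrt ((deriv f r)^2/(4*(M - f r))))
        (nhdsWithin rstar {rstar}ᶜ) (nhds L) := by
      rw [hLdef]
      exact (Real.continuous_sqrt.tendsto (aa/2)).comp hquot
    apply Tendsto.congr' _ hsq2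
    filter_upwards [hpunct] with r hr
    have hrK : r ∈ K := Ioo_subset_Icc_self hr.1
    have hne : r ≠ rstar := by simpa using hr.2
    have h1 : G r ^ 2 = (deriv f r)^2/(4*(M - f r)) := by
      simp only [hGdef]
      rw [div_pow, ← hgsq r hrK]
      ring_nf
    rw [← h1, Real.sqrt_sq (hGpos r hrK hne).le]
  -- region where G > L/2
  have hGev : ∀ᶠ r in nhdsWithin rstar {rstar}ᶜ, L/2 < G r :=
    hGlim.eventually_const_lt (by linarith)
  rw [eventually_iff, mem_nhdsWithin] at hGev
  obtain ⟨O, hOopen, hrsO, hOsub⟩ := hGev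
  obtain ⟨δ₂', hδ₂'pos, hball⟩ := Metric.isOpen_iff.1 hOopen rstar hrsO
  set δ₂ := min (δ₂'/2) (δ/2) with hδ₂def
  have hδ₂pos : 0 < δ₂ := by positivity
  have hδ₂δ : δ₂ < δ := by
    have := min_le_right (δ₂'/2) (δ/2); simp only [hδ₂def]; linarith
  have hδ₂' : δ₂ < δ₂' := by
    have := min_le_left (δ₂'/2) (δ/2); simp only [hδ₂def]; linarith
  have hGK₂ : ∀ r, r ∈ Set.Icc (rstar - δ₂) (rstar + δ₂) → r ≠ rstar → L/2 < G r := by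
    intro r hr hne
    apply hOsub
    constructor
    · apply hball
      rw [Metric.mem_ball, Real.dist_eq, abs_lt]
      constructor <;> [linarith [hr.1]; linarith [hr.2]]
    · simpa using hne
  have hK₂K : Set.Icc (rstar - δ₂) (rstar + δ₂) ⊆ K :=
    Set.Icc_subset_Icc (by linarith) (by linarith)
  -- threshold c₁
  have hrmK : rstar - δ₂ ∈ K := ⟨by linarith, by linarith⟩
  have hrpK : rstar + δ₂ ∈ K := ⟨by linarith, by linarith⟩
  set c₁ := max (max (f (rstar - δ₂)) (f (rstar + δ₂))) (M/2) with hc₁def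
  have hc₁M : c₁ < M := by
    apply max_lt (max_lt _ _) (by linarith)
    · exact hfltM _ hrmK (by linarith)
    · exact hfltM _ hrpK (by linarith)
  have hreg : ∀ᶠ c in nhdsWithin M (Set.Iio M), c ∈ Set.Ioo c₁ M :=
    Ioo_mem_nhdsLT_of_mem ⟨hc₁M, le_rfl⟩
  -- limits of r₁ and r₂
  have hr₁lim : Tendsto r₁ (nhdsWithin M (Set.Iio M)) (nhds rstar) := by
    rw [tendsto_order]
    constructor
    · intro x hx
      set y := max x (rstar - δ₂) with hydef
      have hyK : y ∈ K := ⟨le_trans (by linarith) (le_max_right _ _), by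
        apply max_le (by linarith) (by linarith)⟩
      have hylt : y < rstar := max_lt hx (by linarith)
      have hfy : f y < M := hfltM y hyK hylt.ne
      filter_upwards [Ioo_mem_nhdsLT_of_mem
        (⟨max_lt hc₁M hfy, le_rfl⟩ : M ∈ Set.Ioc (max c₁ (f y)) M)] with c hc
      have hcc : c ∈ Set.Ioo (0:ℝ) M := by
        constructor
        · have h1 : M/2 ≤ c₁ := le_max_right _ _
          have h2 : c₁ ≤ max c₁ (f y) := le_max_left _ _
          linarith [hc.1]
        · exact hc.2
      obtain ⟨hm, hfr⟩ := hr₁ c hcc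
      by_contra hcon
      push_neg at hcon
      have h1 : f (r₁ c) ≤ f y :=
        hmono.monotoneOn ⟨hm.1.le, hm.2.le⟩ ⟨(hK01 hyK).1.le, hylt.le⟩
          (hcon.trans (le_max_left _ _))
      rw [hfr] at h1
      have h2 : f y ≤ max c₁ (f y) := le_max_right _ _
      linarith [hc.1]
    · intro x hx
      filter_upwards [Ioo_mem_nhdsLT_of_mem (⟨hc₁M, le_rfl⟩ : M ∈ Set.Ioc c₁ M)] with c hc
      have hcc : c ∈ Set.Ioo (0:ℝ) M := ⟨by have := le_max_right (max (f (rstar - δ₂)) (f (rstar + δ₂))) (M/2); linarith [hc.1], hc.2⟩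
      exact lt_trans (hr₁ c hcc).1.2 hx
  have hr₂lim : Tendsto r₂ (nhdsWithin M (Set.Iio M)) (nhds rstar) := by
    rw [tendsto_order]
    constructor
    · intro x hx
      filter_upwards [Ioo_mem_nhdsLT_of_mem (⟨hc₁M, le_rfl⟩ : M ∈ Set.Ioc c₁ M)] with c hc
      have hcc : c ∈ Set.Ioo (0:ℝ) M := ⟨by have := le_max_right (max (f (rstar - δ₂)) (f (rstar + δ₂))) (M/2); linarith [hc.1], hc.2⟩
      exact lt_trans hx (hr₂ c hcc).1.1
    · intro x hx
      set y := min x (rstar + δ₂) with hydef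
      have hyK : y ∈ K := ⟨le_min (by linarith) (by linarith), le_trans (min_le_right _ _) (by linarith)⟩
      have hygt : rstar < y := lt_min hx (by linarith)
      have hfy : f y < M := hfltM y hyK hygt.ne'
      filter_upwards [Ioo_mem_nhdsLT_of_mem
        (⟨max_lt hc₁M hfy, le_rfl⟩ : M ∈ Set.Ioc (max c₁ (f y)) M)] with c hc
      have hcc : c ∈ Set.Ioo (0:ℝ) M := by
        constructor
        · have h1 : M/2 ≤ c₁ := le_max_right _ _
          have h2 : c₁ ≤ max c₁ (f y) := le_max_left _ _
          linarith [hc.1]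
        · exact hc.2
      obtain ⟨hm, hfr⟩ := hr₂ c hcc
      by_contra hcon
      push_neg at hcon
      have h1 : f (r₂ c) ≤ f y :=
        hanti.antitoneOn ⟨hygt.le, (hK01 hyK).2.le⟩ ⟨hm.1.le, hm.2.le⟩
          ((min_le_left _ _).trans hcon)
      rw [hfr] at h1
      have h2 : f y ≤ max c₁ (f y) := le_max_right _ _
      linarith [hc.1]
  -- global inverse function and integrand
  set Φ : ℝ → ℝ → ℝ := fun c v =>
    if v ≤ -1 then r₁ c else if 1 ≤ v then r₂ c else if v = 0 then rstar
    else Function.invFunOn (fun r => g r / Real.sqrt (M - c))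
      (Set.Ioo (r₁ c) (r₂ c) \ {rstar}) v with hΦdef
  set H : ℝ → ℝ → ℝ := fun c v =>
    Real.sqrt (M - c) * c / ((M - (M - c)*v^2) *
      (Real.sqrt (M - c) * Real.sqrt (1 - v^2) * Real.sqrt (2*M - (M - c)*(1+v^2))) *
      (-(deriv f (Φ c v)) / (2 * (Real.sqrt (M - c) * v)))) with hHdef
  have hBae : (Set.Ioo (-1:ℝ) 1 \ {0} : Set ℝ) =ᵐ[volume] Set.Ioo (-1:ℝ) 1 :=
    diff_ae_eq_self.2 (measure_mono_null Set.inter_subset_right (Real.volume_singleton))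
  -- main per-c facts
  have key : ∀ c ∈ Set.Ioo c₁ M,
      (r₁ c ∈ Set.Ioo (rstar - δ₂) rstar) ∧ (r₂ c ∈ Set.Ioo rstar (rstar + δ₂)) ∧
      (∀ v ∈ Set.Ioo (-1:ℝ) 1 \ {0},
        (Φ c v ∈ Set.Ioo (r₁ c) (r₂ c) \ {rstar}) ∧
        H c v = c / ((M - (M - c)*v^2) * Real.sqrt (2*M - (M - c)*(1+v^2)) * G (Φ c v)
          * Real.sqrt (1 - v^2))) ∧
      ((∫ r in (r₁ c)..(r₂ c), c / (f r * Real.sqrt ((f r)^2 - c^2)))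
        = ∫ v in Set.Ioo (-1:ℝ) 1, H c v) ∧
      AEStronglyMeasurable (H c) (volume.restrict (Set.Ioo (-1:ℝ) 1)) := by
    intro c hc
    have hcM : c < M := hc.2
    have hcM2 : M/2 < c := lt_of_le_of_lt (le_max_right _ _) hc.1
    have hc0 : 0 < c := by linarith
    obtain ⟨hr₁m, hfr₁⟩ := hr₁ c ⟨hc0, hcM⟩
    obtain ⟨hr₂m, hfr₂⟩ := hr₂ c ⟨hc0, hcM⟩
    have hsc : 0 < Real.sqrt (M - c) := Real.sqrt_pos.2 (by linarith)
    have hsc2 : Real.sqrt (M - c) ^ 2 = M - c := Real.sq_sqrt (by linarith)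
    have hr₁loc : r₁ c ∈ Set.Ioo (rstar - δ₂) rstar := by
      refine ⟨?_, hr₁m.2⟩
      by_contra hcon
      push_neg at hcon
      have h1 : f (r₁ c) ≤ f (rstar - δ₂) :=
        hmono.monotoneOn ⟨hr₁m.1.le, hr₁m.2.le⟩ ⟨by linarith, by linarith⟩ hcon
      rw [hfr₁] at h1
      have h2 : f (rstar - δ₂) ≤ c₁ := le_trans (le_max_left _ _) (le_max_left _ _)
      linarith [hc.1]
    have hr₂loc : r₂ c ∈ Set.Ioo rstar (rstar + δ₂) := by
      refine ⟨hr₂m.1, ?_⟩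
      by_contra hcon
      push_neg at hcon
      have h1 : f (r₂ c) ≤ f (rstar + δ₂) :=
        hanti.antitoneOn ⟨by linarith, by linarith⟩ ⟨hr₂m.1.le, hr₂m.2.le⟩ hcon
      rw [hfr₂] at h1
      have h2 : f (rstar + δ₂) ≤ c₁ := le_trans (le_max_right _ _) (le_max_left _ _)
      linarith [hc.1]
    have hsubδ : Set.Ioo (r₁ c) (r₂ c) ⊆ Set.Ioo (rstar - δ) (rstar + δ) :=
      Set.Ioo_subset_Ioo (by linarith [hr₁loc.1]) (by linarith [hr₂loc.2])
    have hsubK : Set.Ioo (r₁ c) (r₂ c) ⊆ K := hsubδ.trans Set.Ioo_subset_Icc_self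
    have hfgtc : ∀ r ∈ Set.Ioo (r₁ c) (r₂ c), c < f r := by
      intro r hr
      rcases le_or_gt r rstar with h | h
      · rw [← hfr₁]
        exact hmono ⟨hr₁m.1.le, hr₁m.2.le⟩ ⟨(hK01 (hsubK hr)).1.le, h⟩ hr.1
      · rw [← hfr₂]
        exact hanti ⟨h.le, (hK01 (hsubK hr)).2.le⟩ ⟨hr₂m.1.le, hr₂m.2.le⟩ hr.2
    set A : Set ℝ := Set.Ioo (r₁ c) (r₂ c) \ {rstar} with hAdef
    set q : ℝ → ℝ := fun r => g r / Real.sqrt (M - c) with hqdef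
    have hAK : A ⊆ K := fun r hr => hsubK hr.1
    have hgr₂ : g (r₂ c) = Real.sqrt (M - c) := by rw [hgge _ hr₂m.1.le, hfr₂]
    have hgr₁ : g (r₁ c) = -Real.sqrt (M - c) := by rw [hglt _ hr₁m.2, hfr₁]
    have hqmono : StrictMonoOn q K := by
      intro r hr r' hr' hlt
      simp only [hqdef]
      exact div_lt_div_of_pos_right (hgmono hr hr' hlt) hsc
    have hqr₂ : q (r₂ c) = 1 := by
      simp only [hqdef]; rw [hgr₂, div_self hsc.ne']
    have hqr₁ : q (r₁ c) = -1 := by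
      simp only [hqdef]; rw [hgr₁, neg_div, div_self hsc.ne']
    have hqrs : q rstar = 0 := by
      simp only [hqdef]; rw [hg0, zero_div]
    have hqcontR : ContinuousOn q (Set.Icc rstar (r₂ c)) :=
      (hgcontR.mono (Set.Icc_subset_Icc le_rfl (by linarith [hr₂loc.2]))).div_const _
    have hqcontL : ContinuousOn q (Set.Icc (r₁ c) rstar) :=
      (hgcontL.mono (Set.Icc_subset_Icc (by linarith [hr₁loc.1]) le_rfl)).div_const _
    have hr₁K : r₁ c ∈ K := ⟨by linarith [hr₁loc.1], by linarith [hr₁m.2]⟩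
    have hr₂K : r₂ c ∈ K := ⟨by linarith [hr₂m.1], by linarith [hr₂loc.2]⟩
    have himgR : q '' (Set.Ioo rstar (r₂ c)) = Set.Ioo 0 1 := by
      apply Set.Subset.antisymm
      · rintro - ⟨r, hr, rfl⟩
        have hrK : r ∈ K := hsubK ⟨lt_trans hr₁m.2 hr.1, hr.2⟩
        have h1 := hqmono hrsK hrK hr.1
        have h2 := hqmono hrK hr₂K hr.2
        rw [hqrs] at h1
        rw [hqr₂] at h2
        exact ⟨h1, h2⟩
      · have h3 := intermediate_value_Ioo hr₂m.1.le hqcontR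
        rw [hqrs, hqr₂] at h3
        exact h3
    have himgL : q '' (Set.Ioo (r₁ c) rstar) = Set.Ioo (-1) 0 := by
      apply Set.Subset.antisymm
      · rintro - ⟨r, hr, rfl⟩
        have hrK : r ∈ K := hsubK ⟨hr.1, lt_trans hr.2 hr₂m.1⟩
        have h1 := hqmono hr₁K hrK hr.1
        have h2 := hqmono hrK hrsK hr.2
        rw [hqr₁] at h1
        rw [hqrs] at h2
        exact ⟨h1, h2⟩
      · have h3 := intermediate_value_Ioo hr₁m.2.le hqcontL
        rw [hqrs, hqr₁] at h3
        exact h3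
    have hAsplit : A = Set.Ioo (r₁ c) rstar ∪ Set.Ioo rstar (r₂ c) := by
      ext x
      simp only [hAdef, Set.mem_diff, Set.mem_Ioo, Set.mem_singleton_iff, Set.mem_union]
      constructor
      · rintro ⟨⟨h1, h2⟩, h3⟩
        rcases lt_or_gt_of_ne h3 with h | h
        · exact Or.inl ⟨h1, h⟩
        · exact Or.inr ⟨h, h2⟩
      · rintro (⟨h1, h2⟩ | ⟨h1, h2⟩)
        · exact ⟨⟨h1, h2.trans hr₂m.1⟩, ne_of_lt h2⟩
        · exact ⟨⟨lt_trans hr₁m.2 h1, h2⟩, ne_of_gt h1⟩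
    have hBsplit : Set.Ioo (-1:ℝ) 1 \ {0} = Set.Ioo (-1:ℝ) 0 ∪ Set.Ioo (0:ℝ) 1 := by
      ext x
      simp only [Set.mem_diff, Set.mem_Ioo, Set.mem_singleton_iff, Set.mem_union]
      constructor
      · rintro ⟨⟨h1, h2⟩, h3⟩
        rcases lt_or_gt_of_ne h3 with h | h
        · exact Or.inl ⟨h1, h⟩
        · exact Or.inr ⟨h, h2⟩
      · rintro (⟨h1, h2⟩ | ⟨h1, h2⟩)
        · exact ⟨⟨h1, by linarith⟩, ne_of_lt h2⟩
        · exact ⟨⟨by linarith, h2⟩, ne_of_gt h1⟩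
    have himg : q '' A = Set.Ioo (-1:ℝ) 1 \ {0} := by
      rw [hAsplit, Set.image_union, himgL, himgR, hBsplit]
    have hAmeas : MeasurableSet A := measurableSet_Ioo.diff (measurableSet_singleton _)
    have hqd : ∀ r ∈ A, HasDerivWithinAt q (G r / Real.sqrt (M - c)) A r := by
      intro r hr
      exact ((hGderiv r (hsubδ hr.1) (by simpa using hr.2)).div_const _).hasDerivWithinAt
    have hinj : Set.InjOn q A := (hqmono.injOn).mono hAK
    have hcov := integral_image_eq_integral_abs_deriv_smul hAmeas hqd hinj (H c)
    rw [himg] at hcov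
    have hΦinv : ∀ v ∈ Set.Ioo (-1:ℝ) 1 \ {0}, Φ c v = Function.invFunOn q A v := by
      intro v hv
      have hv1 : ¬ v ≤ -1 := not_le.2 hv.1.1
      have hv2 : ¬ (1:ℝ) ≤ v := not_le.2 hv.1.2
      have hv0 : ¬ v = 0 := by simpa using hv.2
      simp only [hΦdef, if_neg hv1, if_neg hv2, if_neg hv0]
      rfl
    have hΦmem : ∀ v ∈ Set.Ioo (-1:ℝ) 1 \ {0}, Φ c v ∈ A := by
      intro v hv
      rw [hΦinv v hv]
      have hvim : v ∈ q '' A := by rw [himg]; exact hv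
      obtain ⟨r, hrA, hqr⟩ := hvim
      exact Function.invFunOn_mem ⟨r, hrA, hqr⟩
    have hqΦ : ∀ v ∈ Set.Ioo (-1:ℝ) 1 \ {0}, q (Φ c v) = v := by
      intro v hv
      rw [hΦinv v hv]
      have hvim : v ∈ q '' A := by rw [himg]; exact hv
      obtain ⟨r, hrA, hqr⟩ := hvim
      exact Function.invFunOn_eq ⟨r, hrA, hqr⟩
    have hΦq : ∀ r ∈ A, Φ c (q r) = r := by
      intro r hr
      have hvB : q r ∈ Set.Ioo (-1:ℝ) 1 \ {0} := by
        rw [← himg]; exact Set.mem_image_of_mem q hr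
      rw [hΦinv _ hvB]
      exact hinj.leftInvOn_invFunOn hr
    have hgΦ : ∀ v ∈ Set.Ioo (-1:ℝ) 1 \ {0}, g (Φ c v) = Real.sqrt (M - c) * v := by
      intro v hv
      have h1 := hqΦ v hv
      simp only [hqdef] at h1
      rw [div_eq_iff hsc.ne'] at h1
      rw [h1, mul_comm]
    have hP4 : ∀ v ∈ Set.Ioo (-1:ℝ) 1 \ {0}, H c v =
        c / ((M - (M - c)*v^2) * Real.sqrt (2*M - (M - c)*(1+v^2)) * G (Φ c v)
          * Real.sqrt (1 - v^2)) := by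
      intro v hv
      have hgv := hgΦ v hv
      have hΦm := hΦmem v hv
      have hGp : 0 < G (Φ c v) := hGpos _ (hAK hΦm) (by simpa using hΦm.2)
      have hv2 : v^2 < 1 := by
        have := abs_lt.2 ⟨hv.1.1, hv.1.2⟩
        calc v^2 = |v|^2 := (sq_abs v).symm
          _ < 1 := pow_lt_one₀ (abs_nonneg v) this two_ne_zero
      have hs1 : 0 < Real.sqrt (1 - v^2) := Real.sqrt_pos.2 (by linarith)
      have hmn : 0 ≤ (M - c) * (1 - v^2) := mul_nonneg (by linarith) (by linarith)
      have hexp1 : M - (M - c)*v^2 - c = (M - c)*(1 - v^2) := by ring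
      have hexp2 : 2*M - (M - c)*(1+v^2) - 2*c = (M - c)*(1 - v^2) := by ring
      have hD1pos : 0 < M - (M - c)*v^2 := by linarith
      have hD2pos : 0 < 2*M - (M - c)*(1+v^2) := by linarith
      have hsD2 : 0 < Real.sqrt (2*M - (M - c)*(1+v^2)) := Real.sqrt_pos.2 hD2pos
      have hGfold : -(deriv f (Φ c v)) / (2 * (Real.sqrt (M - c) * v)) = G (Φ c v) := by
        rw [← hgv]
      simp only [hHdef]
      rw [hGfold]
      field_simp
    have hptw : Set.EqOn (fun r => |G r / Real.sqrt (M - c)| • H c (q r))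
        (fun r => c / (f r * Real.sqrt ((f r)^2 - c^2))) A := by
      intro r hr
      have hrK : r ∈ K := hAK hr
      have hrne : r ≠ rstar := by simpa using hr.2
      have hvB : q r ∈ Set.Ioo (-1:ℝ) 1 \ {0} := by
        rw [← himg]; exact Set.mem_image_of_mem q hr
      have hΦqr : Φ c (q r) = r := hΦq r hr
      have hGp : 0 < G r := hGpos r hrK hrne
      have hfc : c < f r := hfgtc r hr.1
      have hfpos' : 0 < f r := by linarith
      have hgsqr : g r ^ 2 = M - f r := hgsq r hrK
      have hq2 : (M - c) * (q r)^2 = M - f r := by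
        simp only [hqdef]
        rw [div_pow, hsc2, ← hgsqr]
        field_simp [show M - c ≠ 0 from ne_of_gt (by linarith)]
      have hv2 : (q r)^2 < 1 := by
        have := abs_lt.2 ⟨hvB.1.1, hvB.1.2⟩
        calc (q r)^2 = |q r|^2 := (sq_abs _).symm
          _ < 1 := pow_lt_one₀ (abs_nonneg (q r)) this two_ne_zero
      have hD1 : M - (M - c) * (q r)^2 = f r := by rw [hq2]; ring
      have he1 : (f r)^2 - c^2 = ((M - c) * (1 - (q r)^2)) * (2*M - (M - c)*(1 + (q r)^2)) := by
        linear_combination (2*M - (M - c)*(q r)^2 - M + f r) * hq2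
      have hmn : 0 ≤ (M - c) * (1 - (q r)^2) := mul_nonneg (by linarith) (by linarith)
      have hexp2 : 2*M - (M - c)*(1 + (q r)^2) - 2*c = (M - c)*(1 - (q r)^2) := by ring
      have hD2pos : 0 < 2*M - (M - c)*(1 + (q r)^2) := by linarith
      have hD2 : Real.sqrt ((f r)^2 - c^2) = Real.sqrt (M - c) * Real.sqrt (1 - (q r)^2)
          * Real.sqrt (2*M - (M - c)*(1 + (q r)^2)) := by
        rw [he1, Real.sqrt_mul hmn,
            Real.sqrt_mul (by linarith : (0:ℝ) ≤ M - c)]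
      have hHq := hP4 (q r) hvB
      rw [hΦqr] at hHq
      dsimp only
      rw [hHq, hD1, smul_eq_mul, abs_of_pos (div_pos hGp hsc), hD2]
      have hs1 : 0 < Real.sqrt (1 - (q r)^2) := Real.sqrt_pos.2 (by linarith)
      have hsD2 : 0 < Real.sqrt (2*M - (M - c)*(1 + (q r)^2)) := Real.sqrt_pos.2 hD2pos
      field_simp
    have hAae : (A : Set ℝ) =ᵐ[volume] Set.Ioo (r₁ c) (r₂ c) := by
      rw [hAdef]
      exact diff_ae_eq_self.2 (measure_mono_null Set.inter_subset_right Real.volume_singleton)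
    have hchain : (∫ r in (r₁ c)..(r₂ c), c / (f r * Real.sqrt ((f r)^2 - c^2)))
        = ∫ v in Set.Ioo (-1:ℝ) 1, H c v := by
      rw [intervalIntegral.integral_of_le (hr₁m.2.trans hr₂m.1).le,
        MeasureTheory.integral_Ioc_eq_integral_Ioo,
        ← MeasureTheory.setIntegral_congr_set hAae,
        ← MeasureTheory.setIntegral_congr_fun hAmeas hptw, ← hcov]
      exact MeasureTheory.setIntegral_congr_set hBae
    have hΦc1 : ∀ v : ℝ, v ≤ -1 → Φ c v = r₁ c := by
      intro v hv; simp only [hΦdef, if_pos hv]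
    have hΦc2 : ∀ v : ℝ, ¬ v ≤ -1 → (1:ℝ) ≤ v → Φ c v = r₂ c := by
      intro v hv hv'; simp only [hΦdef, if_neg hv, if_pos hv']
    have hΦc3 : ∀ v : ℝ, ¬ v ≤ -1 → ¬ (1:ℝ) ≤ v → v = 0 → Φ c v = rstar := by
      intro v hv hv' hv0; simp only [hΦdef, if_neg hv, if_neg hv', if_pos hv0]
    have hΦsign : ∀ v ∈ Set.Ioo (-1:ℝ) 1 \ {0},
        (v < 0 → Φ c v < rstar) ∧ (0 < v → rstar < Φ c v) := by
      intro v hv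
      have hqv := hqΦ v hv
      have hm := hΦmem v hv
      have hmK : Φ c v ∈ K := hAK hm
      have hne : Φ c v ≠ rstar := by simpa using hm.2
      constructor
      · intro hv0
        rcases lt_or_gt_of_ne hne with h | h
        · exact h
        · exfalso
          have h2 : 0 < g (Φ c v) := hgpos _ hmK h
          have h3 : 0 < q (Φ c v) := by simp only [hqdef]; exact div_pos h2 hsc
          rw [hqv] at h3; linarith
      · intro hv0
        rcases lt_or_gt_of_ne hne with h | h
        · exfalso
          have h2 : g (Φ c v) < 0 := hgneg _ hmK h
          have h3 : q (Φ c v) < 0 := by simp only [hqdef]; exact div_neg_of_neg_of_pos h2 hsc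
          rw [hqv] at h3; linarith
        · exact h
    have hΦrange : ∀ v : ℝ, r₁ c ≤ Φ c v ∧ Φ c v ≤ r₂ c := by
      intro v
      by_cases hv1 : v ≤ -1
      · rw [hΦc1 v hv1]; exact ⟨le_rfl, (hr₁m.2.trans hr₂m.1).le⟩
      by_cases hv2 : (1:ℝ) ≤ v
      · rw [hΦc2 v hv1 hv2]; exact ⟨(hr₁m.2.trans hr₂m.1).le, le_rfl⟩
      by_cases hv0 : v = 0
      · rw [hΦc3 v hv1 hv2 hv0]; exact ⟨hr₁m.2.le, hr₂m.1.le⟩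
      · have hvS : v ∈ Set.Ioo (-1:ℝ) 1 \ {0} :=
          ⟨⟨not_le.1 hv1, not_le.1 hv2⟩, by simpa using hv0⟩
        have h4 := hΦmem v hvS
        exact ⟨h4.1.1.le, h4.1.2.le⟩
    have hΦstrict : ∀ v ∈ Set.Ioo (-1:ℝ) 1 \ {0}, ∀ w ∈ Set.Ioo (-1:ℝ) 1 \ {0},
        v < w → Φ c v < Φ c w := by
      intro v hv w hw hvw
      have h1 := hqΦ v hv
      have h2 := hqΦ w hw
      by_contra hcon
      push_neg at hcon
      rcases eq_or_lt_of_le hcon with he | hl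
      · have h5 : w = v := by rw [← h2, ← h1, he]
        linarith
      · have h3 := hqmono (hAK (hΦmem w hw)) (hAK (hΦmem v hv)) hl
        rw [h1, h2] at h3
        linarith
    have hΦmono : Monotone (Φ c) := by
      intro v w hvw
      rcases eq_or_lt_of_le hvw with rfl | hlt
      · exact le_rfl
      by_cases hv1 : v ≤ -1
      · rw [hΦc1 v hv1]; exact (hΦrange w).1
      by_cases hw2 : (1:ℝ) ≤ w
      · rw [hΦc2 w (not_le.2 (by linarith [not_le.1 hv1])) hw2]
        exact (hΦrange v).2
      have hv1' : -1 < v := not_le.1 hv1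
      have hw2' : w < 1 := not_le.1 hw2
      by_cases hv0 : v = 0
      · subst hv0
        rw [hΦc3 0 hv1 (by norm_num) rfl]
        have hwS : w ∈ Set.Ioo (-1:ℝ) 1 \ {0} := ⟨⟨by linarith, hw2'⟩, by
          simp only [Set.mem_singleton_iff]; intro h; rw [h] at hlt; exact absurd hlt (lt_irrefl 0)⟩
        exact ((hΦsign w hwS).2 hlt).le
      by_cases hw0 : w = 0
      · subst hw0
        rw [hΦc3 0 (by norm_num) (by norm_num) rfl]
        have hvS : v ∈ Set.Ioo (-1:ℝ) 1 \ {0} := ⟨⟨hv1', by linarith⟩, by simpa using hv0⟩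
        exact ((hΦsign v hvS).1 hlt).le
      · have hvS : v ∈ Set.Ioo (-1:ℝ) 1 \ {0} := ⟨⟨hv1', by linarith⟩, by simpa using hv0⟩
        have hwS : w ∈ Set.Ioo (-1:ℝ) 1 \ {0} := ⟨⟨by linarith, hw2'⟩, by simpa using hw0⟩
        exact (hΦstrict v hvS w hwS hlt).le
    have hΦmeas : Measurable (Φ c) := hΦmono.measurable
    have hmeasH : AEStronglyMeasurable (H c) (volume.restrict (Set.Ioo (-1:ℝ) 1)) := by
      apply Measurable.aestronglyMeasurable
      have h1 : Measurable (fun v : ℝ => deriv f (Φ c v)) := (measurable_deriv f).comp hΦmeas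
      have hcont1 : Continuous fun v : ℝ => (M - (M - c)*v^2) *
          (Real.sqrt (M - c) * Real.sqrt (1 - v^2) * Real.sqrt (2*M - (M - c)*(1+v^2))) := by
        fun_prop
      have h2 : Measurable fun v : ℝ => -(deriv f (Φ c v)) / (2 * (Real.sqrt (M - c) * v)) := by
        apply Measurable.div h1.neg
        exact (continuous_const.mul (continuous_const.mul continuous_id)).measurable
      simp only [hHdef]
      exact measurable_const.div (hcont1.measurable.mul h2)
    exact ⟨hr₁loc, hr₂loc, fun v hv => ⟨hΦmem v hv, hP4 v hv⟩, hchain, hmeasH⟩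
  -- dominated convergence
  set BND := M / ((M/2) * (Real.sqrt M * (L/2))) with hBNDdef
  have hsqrtaaM : Real.sqrt (2*M) * L = Real.sqrt (aa*M) := by
    rw [hLdef, ← Real.sqrt_mul (by positivity)]
    ring_nf
  have hmain : Tendsto (fun c => ∫ v in Set.Ioo (-1:ℝ) 1, H c v) (nhdsWithin M (Set.Iio M))
      (nhds (∫ v in Set.Ioo (-1:ℝ) 1, (Real.sqrt (aa*M) * Real.sqrt (1-v^2))⁻¹)) := by
    have hae1 : ∀ᵐ v ∂(volume.restrict (Set.Ioo (-1:ℝ) 1)), v ∈ Set.Ioo (-1:ℝ) 1 :=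
      ae_restrict_mem measurableSet_Ioo
    have hae2 : ∀ᵐ (v:ℝ) ∂(volume.restrict (Set.Ioo (-1:ℝ) 1)), v ≠ 0 := by
      apply ae_restrict_of_ae
      rw [ae_iff]
      have : {a : ℝ | ¬a ≠ 0} = {0} := by ext a; simp
      rw [this]
      exact Real.volume_singleton
    apply MeasureTheory.tendsto_integral_filter_of_dominated_convergence
      (bound := fun v => BND * (Real.sqrt (1-v^2))⁻¹)
    · filter_upwards [hreg] with c hc
      exact (key c hc).2.2.2.2
    · filter_upwards [hreg] with c hc
      filter_upwards [hae1, hae2] with v hv hv0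
      have hvS : v ∈ Set.Ioo (-1:ℝ) 1 \ {0} := ⟨hv, by simpa using hv0⟩
      obtain ⟨hΦm, hP4⟩ := (key c hc).2.2.1 v hvS
      obtain ⟨hr₁loc, hr₂loc, -⟩ := key c hc
      -- positivity facts
      have hcM : c < M := hc.2
      have hcM2 : M/2 < c := lt_of_le_of_lt (le_max_right _ _) hc.1
      have hv2 : v^2 < 1 := by
        have := abs_lt.2 ⟨hv.1, hv.2⟩
        calc v^2 = |v|^2 := (sq_abs v).symm
          _ < 1 := pow_lt_one₀ (abs_nonneg v) this two_ne_zero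
      have hs1 : 0 < Real.sqrt (1 - v^2) := Real.sqrt_pos.2 (by linarith)
      have hmn : 0 ≤ (M - c) * (1 - v^2) := mul_nonneg (by linarith) (by linarith)
      have hexp1 : M - (M - c)*v^2 - c = (M - c)*(1 - v^2) := by ring
      have hexp2 : 2*M - (M - c)*(1+v^2) - 2*c = (M - c)*(1 - v^2) := by ring
      have hD1 : c ≤ M - (M - c)*v^2 := by linarith
      have hD1pos : 0 < M - (M - c)*v^2 := by linarith
      have hD2 : M ≤ 2*M - (M - c)*(1+v^2) := by linarith
      have hsD2 : Real.sqrt M ≤ Real.sqrt (2*M - (M - c)*(1+v^2)) := Real.sqrt_le_sqrt hD2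
      have hsD2pos : 0 < Real.sqrt (2*M - (M - c)*(1+v^2)) :=
        lt_of_lt_of_le (Real.sqrt_pos.2 hM) hsD2
      have hGb : L/2 < G (Φ c v) := by
        apply hGK₂ _ _ (by simpa using hΦm.2)
        have h1 := hΦm.1
        exact ⟨by linarith [h1.1, hr₁loc.1], by linarith [h1.2, hr₂loc.2]⟩
      have hHpos : 0 < H c v := by
        rw [hP4]
        apply div_pos (by linarith)
        apply mul_pos (mul_pos (mul_pos hD1pos hsD2pos) (by linarith)) hs1
      rw [Real.norm_eq_abs, abs_of_pos hHpos, hP4]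
      have hle : c / ((M - (M - c)*v^2) * Real.sqrt (2*M - (M - c)*(1+v^2)) * G (Φ c v)
          * Real.sqrt (1 - v^2)) ≤ M / ((M/2) * Real.sqrt M * (L/2) * Real.sqrt (1 - v^2)) := by
        apply div_le_div₀ (le_of_lt hM) (by linarith) (by positivity)
        have h1 : (M/2) * Real.sqrt M * (L/2) ≤ (M - (M - c)*v^2) *
            Real.sqrt (2*M - (M - c)*(1+v^2)) * G (Φ c v) := by
          apply mul_le_mul (mul_le_mul (by linarith) hsD2 (by positivity) (by linarith))
            (by linarith) (by positivity)
          positivity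
        exact mul_le_mul_of_nonneg_right h1 hs1.le
      apply hle.trans
      apply le_of_eq
      rw [hBNDdef]
      have e : (M/2) * Real.sqrt M * (L/2) * Real.sqrt (1-v^2)
          = ((M/2) * (Real.sqrt M * (L/2))) * Real.sqrt (1-v^2) := by ring
      rw [e, ← div_div, div_eq_mul_inv]
    · have h1 : IntegrableOn (fun v => (Real.sqrt (1-v^2))⁻¹) (Set.Ioo (-1:ℝ) 1) :=
        integrableOn_inv_sqrt_one_sub_sq.mono_set Set.Ioo_subset_Ioc_self
      exact h1.const_mul BND
    · filter_upwards [hae1, hae2] with v hv hv0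
      have hvS : v ∈ Set.Ioo (-1:ℝ) 1 \ {0} := ⟨hv, by simpa using hv0⟩
      have hv2 : v^2 < 1 := by
        have := abs_lt.2 ⟨hv.1, hv.2⟩
        calc v^2 = |v|^2 := (sq_abs v).symm
          _ < 1 := pow_lt_one₀ (abs_nonneg v) this two_ne_zero
      have hs1 : 0 < Real.sqrt (1 - v^2) := Real.sqrt_pos.2 (by linarith)
      have h2M : (0:ℝ) < Real.sqrt (2*M) := Real.sqrt_pos.2 (by linarith)
      have hΦt : Tendsto (fun c => Φ c v) (nhdsWithin M (Set.Iio M))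
          (nhdsWithin rstar {rstar}ᶜ) := by
        rw [tendsto_nhdsWithin_iff]
        constructor
        · apply tendsto_of_tendsto_of_tendsto_of_le_of_le' hr₁lim hr₂lim
          · filter_upwards [hreg] with c hc
            exact (((key c hc).2.2.1 v hvS).1.1.1).le
          · filter_upwards [hreg] with c hc
            exact (((key c hc).2.2.1 v hvS).1.1.2).le
        · filter_upwards [hreg] with c hc
          exact ((key c hc).2.2.1 v hvS).1.2
      have hGt : Tendsto (fun c => G (Φ c v)) (nhdsWithin M (Set.Iio M)) (nhds L) :=
        hGlim.comp hΦt
      have hct : Tendsto (fun c : ℝ => c) (nhdsWithin M (Set.Iio M)) (nhds M) :=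
        tendsto_id.mono_left nhdsWithin_le_nhds
      have hT1 : Tendsto (fun c => M - (M - c)*v^2) (nhdsWithin M (Set.Iio M)) (nhds M) := by
        have h2 : Tendsto (fun c => M - (M - c)*v^2) (nhdsWithin M (Set.Iio M))
            (nhds (M - (M - M)*v^2)) :=
          tendsto_const_nhds.sub ((tendsto_const_nhds.sub hct).mul_const _)
        simpa using h2
      have hT2 : Tendsto (fun c => Real.sqrt (2*M - (M - c)*(1+v^2)))
          (nhdsWithin M (Set.Iio M)) (nhds (Real.sqrt (2*M))) := by
        have h2 : Tendsto (fun c => 2*M - (M - c)*(1+v^2)) (nhdsWithin M (Set.Iio M))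
            (nhds (2*M - (M - M)*(1+v^2))) :=
          tendsto_const_nhds.sub ((tendsto_const_nhds.sub hct).mul_const _)
        have h3 := (Real.continuous_sqrt.tendsto _).comp h2
        simpa [Function.comp_def] using h3
      have hden : Tendsto (fun c => (M - (M - c)*v^2) * Real.sqrt (2*M - (M - c)*(1+v^2))
          * G (Φ c v) * Real.sqrt (1 - v^2)) (nhdsWithin M (Set.Iio M))
          (nhds (M * Real.sqrt (2*M) * L * Real.sqrt (1 - v^2))) :=
        ((hT1.mul hT2).mul hGt).mul tendsto_const_nhds
      have hdenne : M * Real.sqrt (2*M) * L * Real.sqrt (1 - v^2) ≠ 0 :=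
        ne_of_gt (mul_pos (mul_pos (mul_pos hM h2M) hLpos) hs1)
      have hfull := hct.div hden hdenne
      have hval : M / (M * Real.sqrt (2*M) * L * Real.sqrt (1 - v^2))
          = (Real.sqrt (aa*M) * Real.sqrt (1-v^2))⁻¹ := by
        rw [← hsqrtaaM]
        field_simp
      rw [← hval]
      apply Tendsto.congr' _ hfull
      filter_upwards [hreg] with c hc
      exact (((key c hc).2.2.1 v hvS).2).symm
  -- final assembly
  have hIlim : (∫ v in Set.Ioo (-1:ℝ) 1, (Real.sqrt (aa*M) * Real.sqrt (1-v^2))⁻¹)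
      = Real.pi / Real.sqrt (aa*M) := by
    have h1 : ∀ v : ℝ, (Real.sqrt (aa*M) * Real.sqrt (1-v^2))⁻¹
        = (Real.sqrt (aa*M))⁻¹ * (Real.sqrt (1-v^2))⁻¹ := fun v => by rw [mul_inv]
    simp_rw [h1]
    rw [MeasureTheory.integral_const_mul, integral_inv_sqrt_one_sub_sq, inv_mul_eq_div]
  rw [hIlim] at hmain
  have hfin := hmain.const_mul (2:ℝ)
  have hgoalval : (2:ℝ) * (Real.pi / Real.sqrt (aa*M)) = 2 * Real.pi / Real.sqrt (aa*M) := by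
    ring
  rw [hgoalval] at hfin
  apply Tendsto.congr' _ hfin
  filter_upwards [hreg] with c hc
  rw [(key c hc).2.2.2.1]
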